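/- For every integer n > 3 there exists an instance of the setwise-disjoint facility location problem — a strongly connected symmetric directed graph with unit arc weights, customer set C of size n and facility set F ⊇ C of size n+3 — such that the minimum size of a hitting set for the pairs (c,x) of customers and their neighbors (where facility f hits (c,x) if f = c or x ∉ N(c,f)) equals 3, while every setwise-disjoint cover for C has size exactly n. Hence the hitting set lower bound can underestimate the optimal setwise-disjoint cover size by a factor of n/3. -/

import Mathlib

/-- `IsDiPath A a b p` asserts that the list of vertices `p` is a simple directed
path from `a` to `b` in the directed graph with arc relation `A`. -/
def IsDiPath {V : Type*} (A : V → V → Prop) (a b : V) (p : List V) : Prop :=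
  p.head? = some a ∧ p.getLast? = some b ∧ List.Chain' A p ∧ p.Nodup

/-- The arcs traversed by a path: the list of consecutive pairs of vertices. -/
def pathArcs {V : Type*} (p : List V) : List (V × V) :=
  p.zip p.tail

/-- The total weight of a path: the sum of the weights of its arcs. -/
def pathWeight {V : Type*} (w : V → V → ℝ) (p : List V) : ℝ :=
  ((p.zip p.tail).map fun e => w e.1 e.2).sum

/-- `p` is a shortest (minimum total weight) directed path from `a` to `b`. -/
def IsShortestDiPath {V : Type*} (A : V → V → Prop) (w : V → V → ℝ) (a b : V)
    (p : List V) : Prop :=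
  IsDiPath A a b p ∧ ∀ q, IsDiPath A a b q → pathWeight w p ≤ pathWeight w q

/-- The pair `{f₁, f₂}` covers `c` in a pathwise-disjoint fashion: there are shortest
paths from `c` to `f₁` and from `c` to `f₂` with no common vertex except `c`. -/
def CoversPathwise {V : Type*} (A : V → V → Prop) (w : V → V → ℝ) (c f₁ f₂ : V) : Prop :=
  ∃ p₁ p₂, IsShortestDiPath A w c f₁ p₁ ∧ IsShortestDiPath A w c f₂ p₂ ∧
    ∀ v ∈ p₁, v ∈ p₂ → v = c

/-- The pair `{f₁, f₂}` covers `c` in a setwise-disjoint fashion: no shortest path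
from `c` to `f₁` shares a vertex other than `c` with any shortest path from `c` to `f₂`. -/
def CoversSetwise {V : Type*} (A : V → V → Prop) (w : V → V → ℝ) (c f₁ f₂ : V) : Prop :=
  ∀ p₁ p₂, IsShortestDiPath A w c f₁ p₁ → IsShortestDiPath A w c f₂ p₂ →
    ∀ v ∈ p₁, v ∈ p₂ → v = c

/-- `F'` is a pathwise-disjoint cover for the customers `C` (facilities drawn from `F`). -/
def IsPathwiseCover {V : Type*} (A : V → V → Prop) (w : V → V → ℝ) (C F F' : Set V) : Prop :=
  F' ⊆ F ∧ ∀ c ∈ C, c ∉ F' → ∃ f₁ ∈ F', ∃ f₂ ∈ F', f₁ ≠ f₂ ∧ f₁ ≠ c ∧ f₂ ≠ c ∧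
    CoversPathwise A w c f₁ f₂

/-- `F'` is a setwise-disjoint cover for the customers `C` (facilities drawn from `F`). -/
def IsSetwiseCover {V : Type*} (A : V → V → Prop) (w : V → V → ℝ) (C F F' : Set V) : Prop :=
  F' ⊆ F ∧ ∀ c ∈ C, c ∉ F' → ∃ f₁ ∈ F', ∃ f₂ ∈ F', f₁ ≠ f₂ ∧ f₁ ≠ c ∧ f₂ ≠ c ∧
    CoversSetwise A w c f₁ f₂

/-- `spNbrs A w c f` : the set `N(c,f)` of out-neighbours `x` of `c` that lie on
some shortest path from `c` to `f`. -/
def spNbrs {V : Type*} (A : V → V → Prop) (w : V → V → ℝ) (c f : V) : Set V :=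
  {x | A c x ∧ ∃ p, IsShortestDiPath A w c f p ∧ x ∈ p}

/-- `X` is a hitting set for the pairs `(c,x)` of a customer `c` and an out-neighbour `x`
of `c`: `X ⊆ F` and for each such pair, `X` contains `c` or some facility `f ≠ c`
with `x ∉ N(c,f)`. -/
def HSLBHitting {V : Type*} (A : V → V → Prop) (w : V → V → ℝ) (C F X : Set V) : Prop :=
  X ⊆ F ∧ ∀ c ∈ C, ∀ x, A c x → c ∈ X ∨ ∃ f ∈ X, f ≠ c ∧ x ∉ spNbrs A w c f

lemma pathWeight_one {V : Type*} (p : List V) :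
    pathWeight (fun _ _ => (1:ℝ)) p = p.tail.length := by
  have h : min p.length p.tail.length = p.tail.length := by
    simp [List.length_tail]
  simp [pathWeight, List.map_const, List.length_zip, h]

section Paths
variable {V : Type*} {A : V → V → Prop} {a b m : V} {p : List V}

lemma dipath_nonempty (h : IsDiPath A a b p) : p ≠ [] := by
  intro hp; rw [hp] at h; simp [IsDiPath] at h

lemma dipath_self (h : IsDiPath A a a p) : p = [a] := by
  obtain ⟨h1, h2, _, h4⟩ := h
  match p, h1 with
  | a :: t, h1 =>
    simp at h1; subst h1
    match t with
    | [] => rfl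
    | x :: t' =>
      exfalso
      have : (a :: x :: t').getLast (by simp) = a := by
        rw [List.getLast?_eq_getLast (l := a :: x :: t') (by simp)] at h2
        exact Option.some_injective _ h2
      rw [List.getLast_cons (by simp)] at this
      have hmem : a ∈ x :: t' := this ▸ List.getLast_mem (by simp)
      simp only [List.mem_cons] at hmem
      simp at h4
      rcases hmem with hmem | hmem
      · exact h4.1.1 hmem
      · exact h4.1.2 hmem

lemma dipath_ne_len (h : IsDiPath A a b p) (hab : a ≠ b) : 1 ≤ p.tail.length := by
  obtain ⟨h1, h2, _, _⟩ := h
  match p with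
  | [] => simp at h1
  | [x] => simp at h1 h2; exact absurd (h1 ▸ h2 ▸ rfl) hab
  | x :: y :: t => simp

lemma dipath_nonadj_len (h : IsDiPath A a b p) (hab : a ≠ b) (hnA : ¬ A a b) :
    2 ≤ p.tail.length := by
  obtain ⟨h1, h2, h3, _⟩ := h
  match p with
  | [] => simp at h1
  | [x] => simp at h1 h2; exact absurd (h1 ▸ h2 ▸ rfl) hab
  | [x, y] =>
    simp [List.Chain', List.isChain_cons_cons, List.isChain_singleton] at h1 h2 h3
    subst h1; subst h2; exact absurd h3 hnA
  | x :: y :: z :: t => simp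

lemma dipath_two (hA1 : A a m) (hA2 : A m b) (ham : a ≠ m) (hab : a ≠ b) (hmb : m ≠ b) :
    IsDiPath A a b [a, m, b] := by
  refine ⟨rfl, rfl, ?_, ?_⟩ <;> simp [hA1, hA2, ham, hab, hmb, List.Chain', List.isChain_cons_cons, List.isChain_singleton]

lemma shortest_of_two (hA1 : A a m) (hA2 : A m b) (ham : a ≠ m) (hab : a ≠ b) (hmb : m ≠ b)
    (hnA : ¬ A a b) : IsShortestDiPath A (fun _ _ => (1:ℝ)) a b [a, m, b] := by
  refine ⟨dipath_two hA1 hA2 ham hab hmb, fun q hq => ?_⟩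
  rw [pathWeight_one, pathWeight_one]
  have := dipath_nonadj_len hq hab hnA
  simp only [List.tail_cons, List.length_cons, List.length_nil]
  exact_mod_cast by omega

lemma shortest_eq_two (hA1 : A a m) (hA2 : A m b) (ham : a ≠ m) (hab : a ≠ b) (hmb : m ≠ b)
    (hnA : ¬ A a b) (h : IsShortestDiPath A (fun _ _ => (1:ℝ)) a b p) :
    ∃ x, p = [a, x, b] ∧ A a x ∧ A x b := by
  obtain ⟨hp, hmin⟩ := h
  have hlen2 : p.tail.length = 2 := by
    have h1 := dipath_nonadj_len hp hab hnA
    have h2 := hmin [a, m, b] (dipath_two hA1 hA2 ham hab hmb)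
    rw [pathWeight_one, pathWeight_one] at h2
    simp only [List.tail_cons, List.length_cons, List.length_nil] at h2
    have : (p.tail.length : ℝ) ≤ 2 := by exact_mod_cast h2
    have : p.tail.length ≤ 2 := by exact_mod_cast this
    omega
  obtain ⟨hh, hl, hc, _⟩ := hp
  match p, hlen2 with
  | [x, y, z], _ =>
    simp [List.Chain', List.isChain_cons_cons, List.isChain_singleton] at hh hl hc
    subst hh; subst hl
    exact ⟨y, rfl, hc.1, hc.2⟩

end Paths

-- === The instance ===
section Inst
variable (n : ℕ)

abbrev VV := Fin n ⊕ (Fin 3 ⊕ Fin 3)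

variable {n}
def cst (j : Fin n) : VV n := Sum.inl j
def gfc (i : Fin 3) : VV n := Sum.inr (Sum.inl i)
def hb (i : Fin 3) : VV n := Sum.inr (Sum.inr i)

variable (n)
def Adj : VV n → VV n → Prop := fun x y =>
  match x, y with
  | Sum.inl _, Sum.inr (Sum.inr _) => True
  | Sum.inr (Sum.inr _), Sum.inl _ => True
  | Sum.inr (Sum.inl i), Sum.inr (Sum.inr j) => i ≠ j
  | Sum.inr (Sum.inr j), Sum.inr (Sum.inl i) => i ≠ j
  | Sum.inr (Sum.inr i), Sum.inr (Sum.inr j) => i ≠ j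
  | _, _ => False

def Cs : Set (VV n) := Set.range (Sum.inl : Fin n → VV n)
def Gs : Set (VV n) := Set.range (gfc : Fin 3 → VV n)
def Fs : Set (VV n) := Cs n ∪ Gs n

variable {n}

lemma adj_symm : ∀ x y : VV n, Adj n x y → Adj n y x := by
  rintro (j | i | i) (k | l | l) h <;> simp_all [Adj] <;> exact fun e => h e.symm

lemma adj_irrefl : ∀ v : VV n, ¬ Adj n v v := by
  rintro (j | i | i) h <;> simp_all [Adj]

-- adjacency facts
lemma adj_cst_hb (j : Fin n) (i : Fin 3) : Adj n (cst j) (hb i) := trivial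
lemma adj_hb_cst (j : Fin n) (i : Fin 3) : Adj n (hb i) (cst j) := trivial
lemma adj_gfc_hb {i k : Fin 3} (h : i ≠ k) : Adj n (gfc i) (hb k) := h
lemma adj_hb_gfc {i k : Fin 3} (h : i ≠ k) : Adj n (hb k) (gfc i) := h
lemma adj_hb_hb {i k : Fin 3} (h : i ≠ k) : Adj n (hb i) (hb k) := h
lemma nadj_cst_cst (j k : Fin n) : ¬ Adj n (cst j) (cst k) := fun h => h
lemma nadj_cst_gfc (j : Fin n) (i : Fin 3) : ¬ Adj n (cst j) (gfc i) := fun h => h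

-- an index different from both of two given indices
def oth (i j : Fin 3) : Fin 3 :=
  if 0 ≠ i ∧ 0 ≠ j then 0 else if 1 ≠ i ∧ 1 ≠ j then 1 else 2

lemma oth_ne (i j : Fin 3) : oth i j ≠ i ∧ oth i j ≠ j := by revert i j; decide

end Inst

section Inst2
variable {n : ℕ}

lemma cst_ne_hb (j : Fin n) (i : Fin 3) : cst j ≠ hb i := by simp [cst, hb]
lemma cst_ne_gfc (j : Fin n) (i : Fin 3) : cst j ≠ gfc i := by simp [cst, gfc]
lemma hb_ne_gfc (i k : Fin 3) : (hb i : VV n) ≠ gfc k := by intro h; simp [hb, gfc] at h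
lemma hb_ne_cst (i : Fin 3) (j : Fin n) : hb i ≠ cst j := by simp [hb, cst]
lemma gfc_ne_cst (i : Fin 3) (j : Fin n) : gfc i ≠ cst j := by simp [gfc, cst]

lemma sp_cst_cst {j k : Fin n} (hjk : j ≠ k) (i : Fin 3) :
    IsShortestDiPath (Adj n) (fun _ _ => (1:ℝ)) (cst j) (cst k) [cst j, hb i, cst k] :=
  shortest_of_two (adj_cst_hb j i) (adj_hb_cst k i) (cst_ne_hb j i)
    (by simp [cst, hjk]) (hb_ne_cst i k) (nadj_cst_cst j k)

lemma sp_cst_gfc (j : Fin n) {i m : Fin 3} (him : i ≠ m) :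
    IsShortestDiPath (Adj n) (fun _ _ => (1:ℝ)) (cst j) (gfc i) [cst j, hb m, gfc i] :=
  shortest_of_two (adj_cst_hb j m) (adj_hb_gfc him) (cst_ne_hb j m)
    (cst_ne_gfc j i) (hb_ne_gfc m i) (nadj_cst_gfc j i)

-- h i is NOT a shortest-path neighbour towards g i
lemma hb_notin_sp (j : Fin n) (i : Fin 3) :
    hb i ∉ spNbrs (Adj n) (fun _ _ => (1:ℝ)) (cst j) (gfc i) := by
  rintro ⟨-, p, hp, hmem⟩
  have hm : oth i i ≠ i := (oth_ne i i).1
  obtain ⟨x, hpx, hx1, hx2⟩ := shortest_eq_two (adj_cst_hb j (oth i i))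
    (adj_hb_gfc (Ne.symm hm)) (cst_ne_hb j (oth i i)) (cst_ne_gfc j i)
    (hb_ne_gfc (oth i i) i) (nadj_cst_gfc j i) hp
  subst hpx
  simp only [List.mem_cons, List.not_mem_nil, or_false] at hmem
  rcases hmem with h | h | h
  · exact (cst_ne_hb j i) h.symm
  · subst h
    exact hx2 rfl
  · exact (hb_ne_gfc i i) h

-- h i IS a shortest-path neighbour towards any other facility
lemma hb_in_sp_cst {j k : Fin n} (hjk : j ≠ k) (i : Fin 3) :
    hb i ∈ spNbrs (Adj n) (fun _ _ => (1:ℝ)) (cst j) (cst k) :=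
  ⟨adj_cst_hb j i, [cst j, hb i, cst k], sp_cst_cst hjk i, by simp⟩

lemma hb_in_sp_gfc (j : Fin n) {i m : Fin 3} (hmi : m ≠ i) :
    hb i ∈ spNbrs (Adj n) (fun _ _ => (1:ℝ)) (cst j) (gfc m) :=
  ⟨adj_cst_hb j i, [cst j, hb i, gfc m], sp_cst_gfc j hmi, by simp⟩

end Inst2

section Inst3
variable {n : ℕ}

lemma dipath_one {V : Type*} {A : V → V → Prop} (a : V) : IsDiPath A a a [a] := by
  refine ⟨rfl, rfl, ?_, ?_⟩ <;> simp [List.Chain', List.isChain_cons_cons, List.isChain_singleton]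

lemma dipath_adj {V : Type*} {A : V → V → Prop} {a b : V} (h : A a b) (hne : a ≠ b) :
    IsDiPath A a b [a, b] := by
  refine ⟨rfl, rfl, ?_, ?_⟩ <;> simp [h, hne, List.Chain', List.isChain_cons_cons, List.isChain_singleton]

lemma gfc_inj : Function.Injective (gfc : Fin 3 → VV n) := by
  intro a b h; simpa [gfc] using h

lemma conn : ∀ u v : VV n, ∃ p, IsDiPath (Adj n) u v p := by
  rintro (j | i | i) (k | l | l)
  · rcases eq_or_ne j k with rfl | hjk
    · exact ⟨[cst j], dipath_one _⟩
    · exact ⟨_, dipath_two (adj_cst_hb j 0) (adj_hb_cst k 0) (cst_ne_hb j 0)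
        (by simp [cst, hjk]) (hb_ne_cst 0 k)⟩
  · exact ⟨_, dipath_two (adj_cst_hb j (oth l l)) (adj_hb_gfc (fun e => (oth_ne l l).1 e.symm))
      (cst_ne_hb j _) (cst_ne_gfc j l) (hb_ne_gfc _ l)⟩
  · exact ⟨_, dipath_adj (adj_cst_hb j l) (cst_ne_hb j l)⟩
  · exact ⟨_, dipath_two (adj_gfc_hb (fun e => (oth_ne i i).1 e.symm)) (adj_hb_cst k _)
      (Ne.symm (hb_ne_gfc _ i)) (gfc_ne_cst i k) (hb_ne_cst _ k)⟩
  · rcases eq_or_ne i l with rfl | hil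
    · exact ⟨[gfc i], dipath_one _⟩
    · refine ⟨_, dipath_two (adj_gfc_hb (show i ≠ oth i l from fun e => (oth_ne i l).1 e.symm))
        (adj_hb_gfc (show l ≠ oth i l from fun e => (oth_ne i l).2 e.symm))
        (Ne.symm (hb_ne_gfc _ i)) ?_ (hb_ne_gfc _ l)⟩
      simp [gfc, hil]
  · rcases eq_or_ne i l with rfl | hil
    · refine ⟨_, dipath_two (adj_gfc_hb (show i ≠ oth i i from fun e => (oth_ne i i).1 e.symm))
        (adj_hb_hb (oth_ne i i).1) (Ne.symm (hb_ne_gfc _ i))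
        (Ne.symm (hb_ne_gfc i i)) ?_⟩
      simp only [hb, ne_eq, Sum.inr.injEq]
      exact (oth_ne i i).1
    · exact ⟨_, dipath_adj (adj_gfc_hb hil) (Ne.symm (hb_ne_gfc l i))⟩
  · exact ⟨_, dipath_adj (adj_hb_cst k i) (hb_ne_cst i k)⟩
  · rcases eq_or_ne l i with rfl | hli
    · refine ⟨_, dipath_two (adj_hb_hb (show l ≠ oth l l from fun e => (oth_ne l l).1 e.symm))
        (adj_hb_gfc (show l ≠ oth l l from fun e => (oth_ne l l).1 e.symm))
        ?_ (hb_ne_gfc l l) (hb_ne_gfc _ l)⟩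
      simp only [hb, ne_eq, Sum.inr.injEq]
      exact fun e => (oth_ne l l).1 e.symm
    · exact ⟨_, dipath_adj (adj_hb_gfc hli) (hb_ne_gfc i l)⟩
  · rcases eq_or_ne i l with rfl | hil
    · exact ⟨[hb i], dipath_one _⟩
    · refine ⟨_, dipath_adj (adj_hb_hb hil) ?_⟩
      simp [hb, hil]

lemma Cs_ncard : (Cs n).ncard = n := by
  rw [← Nat.card_coe_set_eq, Cs, Nat.card_range_of_injective Sum.inl_injective,
    Nat.card_eq_fintype_card, Fintype.card_fin]

lemma Gs_ncard : (Gs n).ncard = 3 := by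
  rw [← Nat.card_coe_set_eq, Gs, Nat.card_range_of_injective gfc_inj,
    Nat.card_eq_fintype_card, Fintype.card_fin]

lemma CG_disj : Disjoint (Cs n) (Gs n) := by
  rw [Set.disjoint_left]
  rintro a ⟨j, rfl⟩ ⟨i, h⟩
  simp [gfc] at h

lemma Fs_ncard : (Fs n).ncard = n + 3 := by
  rw [Fs, Set.ncard_union_eq CG_disj (Set.toFinite _) (Set.toFinite _), Cs_ncard, Gs_ncard]

end Inst3

section Main
variable {n : ℕ}

-- a shortest path from a customer to a facility through a suitable hub
lemma sp_to_fac {j : Fin n} {f : VV n} (hf : f ∈ Fs n) (hfc : f ≠ cst j) (m : Fin 3)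
    (hm : ∀ i, f = gfc i → i ≠ m) :
    IsShortestDiPath (Adj n) (fun _ _ => (1:ℝ)) (cst j) f [cst j, hb m, f] := by
  rcases hf with ⟨k, rfl⟩ | ⟨i, rfl⟩
  · exact sp_cst_cst (fun e => hfc (by simp [cst, e])) m
  · exact sp_cst_gfc j (hm i rfl)

lemma not_coversSetwise {j : Fin n} {f₁ f₂ : VV n} (h1 : f₁ ∈ Fs n) (h2 : f₂ ∈ Fs n)
    (hne1 : f₁ ≠ cst j) (hne2 : f₂ ≠ cst j) :
    ¬ CoversSetwise (Adj n) (fun _ _ => (1:ℝ)) (cst j) f₁ f₂ := by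
  intro hcov
  have main : ∀ m : Fin 3,
      IsShortestDiPath (Adj n) (fun _ _ => (1:ℝ)) (cst j) f₁ [cst j, hb m, f₁] →
      IsShortestDiPath (Adj n) (fun _ _ => (1:ℝ)) (cst j) f₂ [cst j, hb m, f₂] → False := by
    intro m hp1 hp2
    exact (cst_ne_hb j m) (hcov _ _ hp1 hp2 (hb m) (by simp) (by simp)).symm
  rcases h1 with ⟨k₁, rfl⟩ | ⟨i₁, rfl⟩ <;> rcases h2 with ⟨k₂, rfl⟩ | ⟨i₂, rfl⟩
  · exact main 0 (sp_to_fac (Or.inl ⟨k₁, rfl⟩) hne1 0 (by rintro i h; simp [gfc] at h))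
      (sp_to_fac (Or.inl ⟨k₂, rfl⟩) hne2 0 (by rintro i h; simp [gfc] at h))
  · refine main (oth i₂ i₂)
      (sp_to_fac (Or.inl ⟨k₁, rfl⟩) hne1 _ (by rintro i h; simp [gfc] at h))
      (sp_to_fac (Or.inr ⟨i₂, rfl⟩) hne2 _ ?_)
    rintro i h
    cases gfc_inj h
    exact fun e => (oth_ne i₂ i₂).1 e.symm
  · refine main (oth i₁ i₁)
      (sp_to_fac (Or.inr ⟨i₁, rfl⟩) hne1 _ ?_)
      (sp_to_fac (Or.inl ⟨k₂, rfl⟩) hne2 _ (by rintro i h; simp [gfc] at h))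
    rintro i h
    cases gfc_inj h
    exact fun e => (oth_ne i₁ i₁).1 e.symm
  · refine main (oth i₁ i₂)
      (sp_to_fac (Or.inr ⟨i₁, rfl⟩) hne1 _ ?_)
      (sp_to_fac (Or.inr ⟨i₂, rfl⟩) hne2 _ ?_)
    · rintro i h
      cases gfc_inj h
      exact fun e => (oth_ne i₁ i₂).1 e.symm
    · rintro i h
      cases gfc_inj h
      exact fun e => (oth_ne i₁ i₂).2 e.symm

end Main

/-- For every `n > 3` there is an SDFL instance -- a strongly
connected, loopless, symmetric digraph with unit arc weights, a customer set `C` of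
size `n` and a facility set `F ⊇ C` of size `n + 3` -- on which the minimum hitting
set for the (customer, neighbour) pairs has size `3`, while the minimum
setwise-disjoint cover of `C` has size `n`. -/
theorem hslb_linear_gap_instances (n : ℕ) (hn : 3 < n) :
    ∃ (V : Type) (_ : Finite V) (A : V → V → Prop) (C F : Set V),
      (∀ x y, A x y → A y x) ∧
      (∀ v, ¬ A v v) ∧
      (∀ u v : V, ∃ p, IsDiPath A u v p) ∧
      C ⊆ F ∧ C.ncard = n ∧ F.ncard = n + 3 ∧
      (∃ X, HSLBHitting A (fun _ _ => 1) C F X ∧ X.ncard = 3) ∧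
      (∀ X, HSLBHitting A (fun _ _ => 1) C F X → 3 ≤ X.ncard) ∧
      (∃ F', IsSetwiseCover A (fun _ _ => 1) C F F' ∧ F'.ncard = n) ∧
      (∀ F', IsSetwiseCover A (fun _ _ => 1) C F F' → n ≤ F'.ncard) := by
  refine ⟨VV n, inferInstance, Adj n, Cs n, Fs n, adj_symm, adj_irrefl, conn,
    Set.subset_union_left, Cs_ncard, Fs_ncard, ?_, ?_, ?_, ?_⟩
  · -- hitting set of size 3
    refine ⟨Gs n, ⟨Set.subset_union_right, ?_⟩, Gs_ncard⟩
    rintro c ⟨j, rfl⟩ x hx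
    right
    rcases x with k | i | i
    · exact absurd hx (nadj_cst_cst j k)
    · exact absurd hx (nadj_cst_gfc j i)
    · exact ⟨gfc i, ⟨i, rfl⟩, gfc_ne_cst i j, hb_notin_sp j i⟩
  · -- every hitting set has size ≥ 3
    intro X hX
    have key : ∀ (i : Fin 3) (j : Fin n), cst j ∈ X ∨ gfc i ∈ X := by
      intro i j
      rcases hX.2 (cst j) ⟨j, rfl⟩ (hb i) (adj_cst_hb j i) with h | ⟨f, hfX, hfne, hnot⟩
      · exact Or.inl h
      · right
        rcases hX.1 hfX with ⟨k, rfl⟩ | ⟨m, rfl⟩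
        · exact absurd (hb_in_sp_cst (fun e => hfne (by simp [cst, e.symm])) i) hnot
        · rcases eq_or_ne m i with rfl | hmi
          · exact hfX
          · exact absurd (hb_in_sp_gfc j hmi) hnot
    by_cases hg : ∀ i : Fin 3, gfc i ∈ X
    · have hsub : Gs n ⊆ X := by rintro v ⟨i, rfl⟩; exact hg i
      calc 3 = (Gs n).ncard := Gs_ncard.symm
        _ ≤ X.ncard := Set.ncard_le_ncard hsub (Set.toFinite X)
    · push_neg at hg
      obtain ⟨i, hi⟩ := hg
      have hsub : Cs n ⊆ X := by
        rintro v ⟨j, rfl⟩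
        rcases key i j with h | h
        · exact h
        · exact absurd h hi
      have : n ≤ X.ncard := by
        calc n = (Cs n).ncard := Cs_ncard.symm
          _ ≤ X.ncard := Set.ncard_le_ncard hsub (Set.toFinite X)
      omega
  · -- setwise cover of size n
    exact ⟨Cs n, ⟨Set.subset_union_left, fun c hc hc' => absurd hc hc'⟩, Cs_ncard⟩
  · -- every setwise cover has size ≥ n
    intro F' hF'
    have hsub : Cs n ⊆ F' := by
      rintro v ⟨j, rfl⟩
      by_contra hv
      obtain ⟨f₁, h1, f₂, h2, _, hne1, hne2, hcov⟩ := hF'.2 (Sum.inl j) ⟨j, rfl⟩ hv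
      exact not_coversSetwise (hF'.1 h1) (hF'.1 h2) hne1 hne2 hcov
    calc n = (Cs n).ncard := Cs_ncard.symm
      _ ≤ F'.ncard := Set.ncard_le_ncard hsub (Set.toFinite F')
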